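/- Let A and B be isogenous abelian varieties over a field k. Then discr(A)/discr(B) = Δ_A/Δ_B = δ_A/δ_B, where these are the discriminants of the reduced-trace form, the intrinsic trace form, and the Tate-module trace form respectively on End(A) and End(B), viewed as orders in the common algebra End(A)⊗Q ≅ End(B)⊗Q. -/

import Mathlib

open scoped TensorProduct

noncomputable def gramDet (R : Type) (S : Type) {M : Type} [CommRing R] [AddCommGroup M]
    [Module R M] [Module.Free R M] [Module.Finite R M] [CommRing S] (B : M → M → S) : S :=
  letI := Classical.decEq (Module.Free.ChooseBasisIndex R M)
  Matrix.det (Matrix.of fun i j => B (Module.Free.chooseBasis R M i) (Module.Free.chooseBasis R M j))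

/-- `t : B → K` is the (relative) reduced trace of the finite-dimensional separable
semisimple `K`-algebra `B`: after base change to an algebraic closure, `B` becomes a finite
product of matrix algebras and `t` is computed by the sum of the matrix traces. -/
def IsReducedTrace (K : Type) [Field K] (B : Type) [Ring B] [Algebra K B]
    (t : B →ₗ[K] K) : Prop :=
  ∃ (m : ℕ) (n : Fin m → ℕ)
    (e : (AlgebraicClosure K ⊗[K] B) ≃ₐ[AlgebraicClosure K]
      ((i : Fin m) → Matrix (Fin (n i)) (Fin (n i)) (AlgebraicClosure K))),
    ∀ x : B, algebraMap K (AlgebraicClosure K) (t x)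
      = ∑ i, Matrix.trace (e ((1 : AlgebraicClosure K) ⊗ₜ[K] x) i)


/-- The `R`-linear endomorphism of `W` given by the action of `x : A`. -/
def smulEnd {R A W : Type} [CommSemiring R] [Semiring A] [AddCommMonoid W] [Module R W]
    [Module A W] [SMulCommClass A R W] (x : A) : W →ₗ[R] W where
  toFun w := x • w
  map_add' := smul_add x
  map_smul' r w := by simpa using smul_comm x r w

open Module
lemma gram_rel {V : Type} [AddCommGroup V] [Module ℚ V] {ι : Type} [Fintype ι] [DecidableEq ι]
    (c₁ c₂ : Basis ι ℚ V) :
    ∃ r : ℚ, ∀ φ : LinearMap.BilinForm ℚ V,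
      Matrix.det (Matrix.of fun i j => φ (c₂ i) (c₂ j))
        = r * Matrix.det (Matrix.of fun i j => φ (c₁ i) (c₁ j)) := by
  refine ⟨(c₁.toMatrix c₂).det ^ 2, fun φ => ?_⟩
  have h := BilinForm.toMatrix_mul_basis_toMatrix c₁ c₂ φ
  have e1 : LinearMap.BilinForm.toMatrix c₂ φ = Matrix.of fun i j => φ (c₂ i) (c₂ j) := by
    ext i j; simp [LinearMap.BilinForm.toMatrix_apply]
  have e2 : LinearMap.BilinForm.toMatrix c₁ φ = Matrix.of fun i j => φ (c₁ i) (c₁ j) := by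
    ext i j; simp [LinearMap.BilinForm.toMatrix_apply]
  rw [e1, e2] at h
  rw [← h, Matrix.det_mul, Matrix.det_mul, Matrix.det_transpose]
  ring

lemma order_basis (E : Type) [Ring E] [Algebra ℚ E] (Λ : Subring E)
    [Module.Free ℤ Λ] [Module.Finite ℤ Λ]
    (h : Submodule.span ℚ (Λ : Set E) = ⊤) :
    ∃ c : Basis (Free.ChooseBasisIndex ℤ Λ) ℚ E,
      ∀ i, c i = (Free.chooseBasis ℤ Λ i : E) := by
  set b := Free.chooseBasis ℤ Λ
  set f : Λ →ₗ[ℤ] E := (Λ.subtype : Λ →+* E).toAddMonoidHom.toIntLinearMap with hf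
  have hfinj : Function.Injective f := Subtype.coe_injective
  set v : Free.ChooseBasisIndex ℤ Λ → E := fun i => (b i : E) with hv
  have hvf : v = f ∘ b := rfl
  have hliZ : LinearIndependent ℤ v := by
    rw [hvf]
    exact b.linearIndependent.map' f (LinearMap.ker_eq_bot.2 hfinj)
  have hli : LinearIndependent ℚ v := (LinearIndependent.iff_fractionRing ℤ ℚ).1 hliZ
  have hsp : ⊤ ≤ Submodule.span ℚ (Set.range v) := by
    rw [← h, Submodule.span_le]
    intro x hx
    have h1 : (⟨x, hx⟩ : Λ) ∈ Submodule.span ℤ (Set.range b) := by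
      rw [b.span_eq]; trivial
    have h2 : x ∈ Submodule.map f (Submodule.span ℤ (Set.range b)) :=
      ⟨⟨x, hx⟩, h1, rfl⟩
    rw [Submodule.map_span, ← Set.range_comp, ← hvf] at h2
    have h3 : Submodule.span ℤ (Set.range v)
        ≤ (Submodule.span ℚ (Set.range v)).restrictScalars ℤ := by
      rw [Submodule.span_le]; exact Submodule.subset_span
    exact h3 h2
  exact ⟨Basis.mk hli hsp, fun i => Basis.mk_apply hli hsp i⟩


/-- let `A` and `B` be isogenous abelian varieties; then `End(A)` and `End(B)`
are orders `Λ₁, Λ₂` in the common semisimple algebra `E = End(A)⊗ℚ ≅ End(B)⊗ℚ`, acting on the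
common rational Tate module `W`, and
`discr(A)/discr(B) = Δ_A/Δ_B = δ_A/δ_B` for the reduced-trace form, the intrinsic trace form
and the Tate-module trace form (stated cross-multiplied). -/
theorem stmt13
    (E : Type) [Ring E] [Algebra ℚ E] [FiniteDimensional ℚ E] [IsSemisimpleRing E]
    (W : Type) [AddCommGroup W] [Module ℚ W] [FiniteDimensional ℚ W]
    [Module E W] [SMulCommClass E ℚ W] [FaithfulSMul E W]
    (t : E →ₗ[ℚ] ℚ) (ht : IsReducedTrace ℚ E t)
    (Λ₁ Λ₂ : Subring E)
    [Module.Free ℤ Λ₁] [Module.Finite ℤ Λ₁] [Module.Free ℤ Λ₂] [Module.Finite ℤ Λ₂]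
    (h1 : Submodule.span ℚ (Λ₁ : Set E) = ⊤) (h2 : Submodule.span ℚ (Λ₂ : Set E) = ⊤) :
    let d₁ : ℚ := gramDet ℤ ℚ (fun x y : Λ₁ => t ((x : E) * (y : E)));
    let d₂ : ℚ := gramDet ℤ ℚ (fun x y : Λ₂ => t ((x : E) * (y : E)));
    let Δ₁ : ℚ := gramDet ℤ ℚ
      (fun x y : Λ₁ => LinearMap.trace ℚ E (LinearMap.mulLeft ℚ ((x : E) * (y : E))));
    let Δ₂ : ℚ := gramDet ℤ ℚ
      (fun x y : Λ₂ => LinearMap.trace ℚ E (LinearMap.mulLeft ℚ ((x : E) * (y : E))));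
    let δ₁ : ℚ := gramDet ℤ ℚ
      (fun x y : Λ₁ => LinearMap.trace ℚ W (smulEnd ((x : E) * (y : E)) : W →ₗ[ℚ] W));
    let δ₂ : ℚ := gramDet ℤ ℚ
      (fun x y : Λ₂ => LinearMap.trace ℚ W (smulEnd ((x : E) * (y : E)) : W →ₗ[ℚ] W));
    d₁ * Δ₂ = d₂ * Δ₁ ∧ d₁ * δ₂ = d₂ * δ₁ ∧ Δ₁ * δ₂ = Δ₂ * δ₁ := by
  obtain ⟨c₁, hc₁⟩ := order_basis E Λ₁ h1
  obtain ⟨c₂, hc₂⟩ := order_basis E Λ₂ h2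
  letI := Classical.decEq (Free.ChooseBasisIndex ℤ Λ₁)
  letI := Classical.decEq (Free.ChooseBasisIndex ℤ Λ₂)
  let e := c₂.indexEquiv c₁
  obtain ⟨r, hr⟩ := gram_rel c₁ (c₂.reindex e)
  have key : ∀ φ : LinearMap.BilinForm ℚ E,
      gramDet ℤ ℚ (fun x y : Λ₂ => φ (x : E) (y : E))
        = r * gramDet ℤ ℚ (fun x y : Λ₁ => φ (x : E) (y : E)) := by
    intro φ
    have g1 : gramDet ℤ ℚ (fun x y : Λ₁ => φ (x : E) (y : E))
        = Matrix.det (Matrix.of fun i j => φ (c₁ i) (c₁ j)) := by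
      unfold gramDet
      congr 1
      ext i j
      simp only [Matrix.of_apply]
      rw [hc₁ i, hc₁ j]
    have g2 : gramDet ℤ ℚ (fun x y : Λ₂ => φ (x : E) (y : E))
        = Matrix.det (Matrix.of fun i j => φ (c₂ i) (c₂ j)) := by
      unfold gramDet
      congr 1
      ext i j
      simp only [Matrix.of_apply]
      rw [hc₂ i, hc₂ j]
    have g3 : Matrix.det (Matrix.of fun i j => φ ((c₂.reindex e) i) ((c₂.reindex e) j))
        = Matrix.det (Matrix.of fun i j => φ (c₂ i) (c₂ j)) := by
      have : (Matrix.of fun i j => φ ((c₂.reindex e) i) ((c₂.reindex e) j))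
          = (Matrix.of fun i j => φ (c₂ i) (c₂ j)).submatrix e.symm e.symm := by
        ext i j; simp [Basis.reindex_apply]
      rw [this, Matrix.det_submatrix_equiv_self]
    rw [g1, g2, ← g3, hr φ]
  have key2 : ∀ f : E →ₗ[ℚ] ℚ,
      gramDet ℤ ℚ (fun x y : Λ₂ => f ((x : E) * (y : E)))
        = r * gramDet ℤ ℚ (fun x y : Λ₁ => f ((x : E) * (y : E))) := by
    intro f
    have h := key ((LinearMap.mul ℚ E).compr₂ f)
    have e2 : ∀ (Λ : Subring E), (fun x y : Λ => ((LinearMap.mul ℚ E).compr₂ f) (x : E) (y : E))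
        = fun x y : Λ => f ((x : E) * (y : E)) := by
      intro Λ; funext x y; simp [LinearMap.mul_apply']
    rw [e2 Λ₁, e2 Λ₂] at h
    exact h
  -- the intrinsic trace form
  have fΔ : ∀ (Λ : Subring E), (fun x y : Λ =>
        ((LinearMap.trace ℚ E) ∘ₗ (LinearMap.mul ℚ E)) ((x : E) * (y : E)))
      = fun x y : Λ => LinearMap.trace ℚ E (LinearMap.mulLeft ℚ ((x : E) * (y : E))) := by
    intro Λ; funext x y
    simp only [LinearMap.comp_apply]
    congr 1
  -- the Tate form
  have hadd : ∀ x y : E, (smulEnd (x + y) : W →ₗ[ℚ] W) = smulEnd x + smulEnd y := by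
    intro x y; ext w; exact add_smul x y w
  have hzero : (smulEnd (0 : E) : W →ₗ[ℚ] W) = 0 := by
    ext w; exact zero_smul E w
  set g : E →+ ℚ :=
    { toFun := fun z => LinearMap.trace ℚ W (smulEnd z : W →ₗ[ℚ] W)
      map_zero' := by
        show LinearMap.trace ℚ W (smulEnd (0 : E) : W →ₗ[ℚ] W) = 0
        rw [hzero]; simp
      map_add' := fun x y => by
        show LinearMap.trace ℚ W (smulEnd (x + y) : W →ₗ[ℚ] W) = _
        rw [hadd]; simp } with hg
  have fδ : ∀ (Λ : Subring E), (fun x y : Λ => g.toRatLinearMap ((x : E) * (y : E)))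
      = fun x y : Λ => LinearMap.trace ℚ W (smulEnd ((x : E) * (y : E)) : W →ₗ[ℚ] W) := by
    intro Λ; funext x y; rfl
  have kt := key2 t
  have kΔ := key2 ((LinearMap.trace ℚ E) ∘ₗ (LinearMap.mul ℚ E))
  have kδ := key2 g.toRatLinearMap
  rw [fΔ Λ₁, fΔ Λ₂] at kΔ
  rw [fδ Λ₁, fδ Λ₂] at kδ
  intro d₁ d₂ Δ₁ Δ₂ δ₁ δ₂
  have h₁ : d₂ = r * d₁ := kt
  have h₂ : Δ₂ = r * Δ₁ := kΔ
  have h₃ : δ₂ = r * δ₁ := kδ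
  exact ⟨by rw [h₁, h₂]; ring, by rw [h₁, h₃]; ring, by rw [h₂, h₃]; ring⟩
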